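/- Let E be a finite subset of Z^p with p > 1, and let Fr(E) be the set of points b in E such that at least one of the 2p points b ± e_1, ..., b ± e_p (where e_j are the standard basis vectors) does not belong to E. Then (#E)^((p-1)/p) ≤ (p-1) · #Fr(E). -/

import Mathlib

open MeasureTheory Function Set
open scoped ENNReal NNReal

private lemma count_int_sigmaFinite : SigmaFinite (Measure.count : Measure ℤ) := by
  apply Measure.sigmaFinite_of_countable (S := Set.range (fun a : ℤ => ({a} : Set ℤ)))
    (Set.countable_range _)
  · rintro s ⟨a, rfl⟩
    simp [Measure.count_singleton]
  · ext x; simp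

theorem stmt0 (p : ℕ) (hp : 1 < p) (E : Finset (Fin p → ℤ))
    (Fr : Finset (Fin p → ℤ))
    (hFr : Fr = E.filter (fun b => ∃ j : Fin p,
      (b + Pi.single j 1) ∉ E ∨ (b - Pi.single j 1) ∉ E)) :
    (E.card : ℝ) ^ (((p : ℝ) - 1) / p) ≤ ((p : ℝ) - 1) * Fr.card := by
  classical
  have hp1 : (1:ℝ) < p := by exact_mod_cast hp
  have hp0 : (0:ℝ) < p := by linarith
  have hpm1 : (0:ℝ) < (p:ℝ) - 1 := by linarith
  haveI : SigmaFinite (Measure.count : Measure ℤ) := count_int_sigmaFinite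
  set μ : Fin p → Measure ℤ := fun _ => Measure.count with hμdef
  have hmFr : MeasurableSet (↑Fr : Set (Fin p → ℤ)) := Fr.finite_toSet.measurableSet
  have hmE : MeasurableSet (↑E : Set (Fin p → ℤ)) := E.finite_toSet.measurableSet
  have hf : Measurable ((↑Fr : Set (Fin p → ℤ)).indicator (1 : (Fin p → ℤ) → ℝ≥0∞)) :=
    measurable_one.indicator hmFr
  -- the pi measure of a finset is its cardinality
  have hcard : ∀ S : Finset (Fin p → ℤ), Measure.pi μ ↑S = S.card := by
    intro S
    have hU : (↑S : Set (Fin p → ℤ)) = ⋃ x ∈ S, {x} := by ext y; simp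
    rw [hU, measure_biUnion_finset]
    · have h1 : ∀ x : Fin p → ℤ, Measure.pi μ {x} = 1 := by
        intro x
        rw [← Set.univ_pi_singleton x, Measure.pi_pi]
        simp [hμdef, Measure.count_singleton]
      simp [h1]
    · intro x _ y _ hxy
      simp [Function.onFun, Set.disjoint_singleton, hxy]
    · exact fun x _ => measurableSet_singleton x
  -- every line through a point of `E` contains a point of `Fr`
  have hline : ∀ x ∈ E, ∀ i : Fin p, ∃ t : ℤ, Function.update x i t ∈ Fr := by
    intro x hx i
    set S : Finset (Fin p → ℤ) := E.filter (fun b => ∃ t : ℤ, Function.update x i t = b)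
      with hS
    have hxS : x ∈ S := by
      simp only [hS, Finset.mem_filter]
      exact ⟨hx, x i, Function.update_eq_self i x⟩
    obtain ⟨b, hbS, hbmax⟩ := S.exists_max_image (fun b => b i) ⟨x, hxS⟩
    simp only [hS, Finset.mem_filter] at hbS
    obtain ⟨hbE, t₀, hbt⟩ := hbS
    refine ⟨b i, ?_⟩
    have hbeq : Function.update x i (b i) = b := by
      rw [← hbt]; simp
    rw [hbeq, hFr, Finset.mem_filter]
    refine ⟨hbE, i, Or.inl ?_⟩
    intro hcon
    have heq : b + Pi.single i 1 = Function.update x i (b i + 1) := by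
      funext j
      by_cases hj : j = i
      · subst hj; simp
      · simp [Function.update_of_ne hj, Pi.single_eq_of_ne hj, ← hbt]
    have hmem : b + Pi.single i 1 ∈ S := by
      simp only [hS, Finset.mem_filter]
      exact ⟨hcon, b i + 1, heq.symm⟩
    have h1 := hbmax _ hmem
    rw [heq] at h1
    simp only [Function.update_self] at h1
    omega
  -- the grid-lines lemma with `f` the indicator of `Fr`
  set q : ℝ := Real.conjExponent p with hqdef
  have hq : q = (p : ℝ) / ((p:ℝ) - 1) := rfl
  have hq0 : 0 < q := by rw [hq]; positivity
  have hconj : ((Fintype.card (Fin p) : ℝ)).HolderConjugate q := by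
    simpa [Fintype.card_fin] using Real.HolderConjugate.conjExponent hp1
  have key := lintegral_prod_lintegral_pow_le μ hconj hf
  simp only [Fintype.card_fin] at key
  -- lower bound for the LHS of `key`
  have hE_le : (E.card : ℝ≥0∞) ≤
      ∫⁻ x, ∏ i, (∫⁻ t, (↑Fr : Set (Fin p → ℤ)).indicator 1 (Function.update x i t) ∂μ i) ^
        ((1:ℝ) / ((p:ℝ) - 1)) ∂Measure.pi μ := by
    rw [← hcard E, ← lintegral_indicator_one hmE]
    refine lintegral_mono fun x => ?_
    by_cases hx : x ∈ E
    · rw [Set.indicator_of_mem (Finset.mem_coe.2 hx)]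
      refine Finset.one_le_prod' fun i _ => ?_
      obtain ⟨t, ht⟩ := hline x hx i
      have h1 : (1:ℝ≥0∞) ≤ ∫⁻ t', (↑Fr : Set (Fin p → ℤ)).indicator 1
          (Function.update x i t') ∂μ i := by
        have h2 : (1:ℝ≥0∞) = ∫⁻ t', ({t} : Set ℤ).indicator 1 t' ∂μ i := by
          rw [lintegral_indicator_one (measurableSet_singleton t)]
          simp [hμdef, Measure.count_singleton]
        rw [h2]
        refine lintegral_mono fun t' => ?_
        by_cases ht' : t' = t
        · subst ht'
          simp [Set.indicator_of_mem, Finset.mem_coe.2 ht]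
        · simp [Set.indicator_of_notMem, ht']
      calc (1:ℝ≥0∞) = 1 ^ ((1:ℝ) / ((p:ℝ) - 1)) := (ENNReal.one_rpow _).symm
        _ ≤ _ := ENNReal.rpow_le_rpow h1 (by positivity)
    · rw [Set.indicator_of_notMem (fun h => hx (Finset.mem_coe.1 h))]
      exact zero_le
  -- upper bound for the RHS of `key`
  rw [lintegral_indicator_one hmFr, hcard Fr] at key
  have hEF : (E.card : ℝ≥0∞) ≤ (Fr.card : ℝ≥0∞) ^ q := le_trans hE_le key
  -- back to the reals
  have hreal : (E.card : ℝ) ≤ (Fr.card : ℝ) ^ q := by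
    have hfin : ((Fr.card : ℝ≥0∞) ^ q) ≠ ⊤ :=
      ENNReal.rpow_ne_top_of_nonneg hq0.le (by simp)
    have h3 := (ENNReal.toReal_le_toReal (by simp) hfin).mpr hEF
    simpa [← ENNReal.toReal_rpow] using h3
  have h2 : (E.card : ℝ) ^ (((p:ℝ) - 1) / p) ≤ ((Fr.card : ℝ) ^ q) ^ (((p:ℝ) - 1) / p) :=
    Real.rpow_le_rpow (Nat.cast_nonneg _) hreal (div_nonneg hpm1.le hp0.le)
  have h3 : ((Fr.card : ℝ) ^ q) ^ (((p:ℝ) - 1) / p) = (Fr.card : ℝ) := by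
    rw [← Real.rpow_mul (Nat.cast_nonneg _)]
    have : q * (((p:ℝ) - 1) / p) = 1 := by
      rw [hq]; field_simp
    rw [this, Real.rpow_one]
  refine le_trans h2 ?_
  rw [h3]
  have h4 : (2:ℝ) ≤ p := by exact_mod_cast hp
  exact le_mul_of_one_le_left (Nat.cast_nonneg _) (by linarith)
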